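/- Combinatorial mutations preserve the Ehrhart series of the dual polytope: if P is a lattice polytope with 0 in its interior and Q := mut_w(P,F) is a combinatorial mutation of P, then for every positive integer k, |kP* ∩ M| = |kQ* ∩ M|. -/

import Mathlib

open Set Pointwise

noncomputable section

def pairing {n : ℕ} (w : Fin n → ℤ) (x : Fin n → ℚ) : ℚ :=
  ∑ i, (w i : ℚ) * x i

def IsLatticePt {n : ℕ} (x : Fin n → ℚ) : Prop := ∀ i, ∃ z : ℤ, x i = (z : ℚ)

def IsLatticePolytope {n : ℕ} (P : Set (Fin n → ℚ)) : Prop :=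
  ∃ S : Finset (Fin n → ℚ), (∀ x ∈ S, IsLatticePt x) ∧ P = convexHull ℚ (S : Set (Fin n → ℚ))

def IsPrimitive {n : ℕ} (w : Fin n → ℤ) : Prop := Finset.univ.gcd w = 1

def wSlice {n : ℕ} (w : Fin n → ℤ) (h : ℤ) (P : Set (Fin n → ℚ)) : Set (Fin n → ℚ) :=
  convexHull ℚ {x | x ∈ P ∧ IsLatticePt x ∧ pairing w x = (h : ℚ)}

def mutation {n : ℕ} (w : Fin n → ℤ) (P F : Set (Fin n → ℚ)) (G : ℤ → Set (Fin n → ℚ)) :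
    Set (Fin n → ℚ) :=
  convexHull ℚ ((⋃ h : ℤ, ⋃ _ : h < 0, G h) ∪
    ⋃ h : ℤ, ⋃ _ : 0 ≤ h, (wSlice w h P + (h : ℚ) • F))

def IsMutData {n : ℕ} (w : Fin n → ℤ) (P F : Set (Fin n → ℚ))
    (G : ℤ → Set (Fin n → ℚ)) : Prop :=
  IsLatticePolytope F ∧ F.Nonempty ∧ (∀ x ∈ F, pairing w x = 0) ∧
  ∀ h : ℤ, h < 0 →
    (G h = ∅ ∨ IsLatticePolytope (G h)) ∧
    {v | v ∈ P.extremePoints ℚ ∧ pairing w v = (h : ℚ)} ⊆ G h + (-(h : ℚ)) • F ∧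
    G h + (-(h : ℚ)) • F ⊆ wSlice w h P

def dpair {n : ℕ} (u v : Fin n → ℚ) : ℚ := ∑ i, u i * v i

def dualP {n : ℕ} (P : Set (Fin n → ℚ)) : Set (Fin n → ℚ) := {u | ∀ v ∈ P, -1 ≤ dpair u v}

/-! ### Auxiliary lemmas -/


/-- Minkowski theorem for finite sets: the convex hull of a finite set is the convex hull of
its extreme points. -/
theorem minkowski_hull {𝕜 V : Type*} [Field 𝕜] [LinearOrder 𝕜] [IsStrictOrderedRing 𝕜] [AddCommGroup V] [Module 𝕜 V]
    (S : Finset V) :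
    convexHull 𝕜 (S : Set V) ⊆
      convexHull 𝕜 ((convexHull 𝕜 (S : Set V)).extremePoints 𝕜) := by
  classical
  induction S using Finset.strongInduction with
  | _ S ih =>
    by_cases hall : ∀ s ∈ S, s ∈ (convexHull 𝕜 (S : Set V)).extremePoints 𝕜
    · exact convexHull_mono (fun x hx => hall x hx)
    · push_neg at hall
      obtain ⟨s, hsS, hsne⟩ := hall
      have hsA : s ∈ convexHull 𝕜 (S : Set V) := subset_convexHull _ _ hsS
      rw [mem_extremePoints] at hsne
      push_neg at hsne
      obtain ⟨x, hx, y, hy, hseg, hne⟩ := hsne hsA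
      obtain ⟨a, b, ha, hb, hab, habs⟩ := hseg
      have hscv : s ∈ convexHull 𝕜 ((S.erase s : Finset V) : Set V) := by
        rcases (S.erase s).eq_empty_or_nonempty with he | hne'
        · have hS : S = {s} := by
            apply Finset.eq_singleton_iff_unique_mem.2
            refine ⟨hsS, fun t ht => ?_⟩
            by_contra hts
            have := Finset.mem_erase.2 ⟨hts, ht⟩
            rw [he] at this
            exact absurd this (Finset.notMem_empty t)
          rw [hS] at hx hy
          simp only [Finset.coe_singleton, convexHull_singleton, mem_singleton_iff] at hx hy
          exact (hne hx hy).elim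
        · have hins : (S : Set V) = insert s ((S.erase s : Finset V) : Set V) := by
            rw [← Finset.coe_insert, Finset.insert_erase hsS]
          rw [hins, convexHull_insert hne'.to_set] at hx hy
          rw [mem_convexJoin] at hx hy
          obtain ⟨sx, hsx, zx, hzx, hxseg⟩ := hx
          obtain ⟨sy, hsy, zy, hzy, hyseg⟩ := hy
          rw [Set.mem_singleton_iff] at hsx hsy
          rw [hsx] at hxseg
          rw [hsy] at hyseg
          obtain ⟨a₁, b₁, ha₁, hb₁, hab₁, hx'⟩ := hxseg
          obtain ⟨a₂, b₂, ha₂, hb₂, hab₂, hy'⟩ := hyseg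
          obtain ⟨c, hc⟩ : ∃ c, c = a * b₁ + b * b₂ := ⟨_, rfl⟩
          have hcn : 0 ≤ c := by rw [hc]; positivity
          rcases eq_or_lt_of_le hcn with hc0 | hcpos
          · exfalso
            rw [hc] at hc0
            have h1 : a * b₁ = 0 ∧ b * b₂ = 0 := by
              constructor <;> nlinarith [mul_nonneg ha.le hb₁, mul_nonneg hb.le hb₂]
            have hb₁0 : b₁ = 0 := by
              rcases mul_eq_zero.1 h1.1 with h | h
              · exact absurd h (ne_of_gt ha)
              · exact h
            have hb₂0 : b₂ = 0 := by
              rcases mul_eq_zero.1 h1.2 with h | h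
              · exact absurd h (ne_of_gt hb)
              · exact h
            have hxs : x = s := by
              have : a₁ = 1 := by linarith
              rw [← hx', this, hb₁0]; simp
            have hys : y = s := by
              have : a₂ = 1 := by linarith
              rw [← hy', this, hb₂0]; simp
            exact hne hxs hys
          · have hkey : c • s = (a * b₁) • zx + (b * b₂) • zy := by
              have h2 : s = a • (a₁ • s + b₁ • zx) + b • (a₂ • s + b₂ • zy) := by
                rw [hx', hy', habs]
              have h3 : (1 : 𝕜) - (a * a₁ + b * a₂) = c := by
                have : a * (a₁ + b₁) + b * (a₂ + b₂) = 1 := by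
                  rw [hab₁, hab₂]; linarith
                rw [hc]; linear_combination (-a) * hab₁ - b * hab₂ - hab
              have h4 : s - (a * a₁ + b * a₂) • s = (a * b₁) • zx + (b * b₂) • zy := by
                nth_rewrite 1 [h2]
                module
              calc c • s = ((1 : 𝕜) - (a * a₁ + b * a₂)) • s := by rw [h3]
                _ = s - (a * a₁ + b * a₂) • s := by module
                _ = _ := h4
            have hs_eq : s = (a * b₁ / c) • zx + (b * b₂ / c) • zy := by
              calc s = c⁻¹ • (c • s) := by
                    rw [smul_smul, inv_mul_cancel₀ (ne_of_gt hcpos), one_smul]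
                _ = c⁻¹ • ((a * b₁) • zx + (b * b₂) • zy) := by rw [hkey]
                _ = (a * b₁ / c) • zx + (b * b₂ / c) • zy := by
                    rw [smul_add, smul_smul, smul_smul, inv_mul_eq_div, inv_mul_eq_div]
            have hmem := (convex_convexHull 𝕜 ((S.erase s : Finset V) : Set V)) hzx hzy
              (div_nonneg (mul_nonneg ha.le hb₁) hcn) (div_nonneg (mul_nonneg hb.le hb₂) hcn)
              (by rw [← add_div, ← hc, div_self (ne_of_gt hcpos)])
            rwa [← hs_eq] at hmem
      have key : convexHull 𝕜 (S : Set V) = convexHull 𝕜 ((S.erase s : Finset V) : Set V) := by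
        apply Set.Subset.antisymm
        · have hins : (S : Set V) = insert s ((S.erase s : Finset V) : Set V) := by
            rw [← Finset.coe_insert, Finset.insert_erase hsS]
          rw [hins]
          apply convexHull_min _ (convex_convexHull 𝕜 _)
          rintro t (rfl | ht)
          · exact hscv
          · exact subset_convexHull _ _ ht
        · exact convexHull_mono (by exact_mod_cast Finset.erase_subset s S)
      rw [key]
      exact ih (S.erase s) (Finset.erase_ssubset hsS)


section MutAux

variable {n : ℕ}

lemma dpair_isLinearMap (u : Fin n → ℚ) : IsLinearMap ℚ (dpair u) := by
  constructor
  · intro x y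
    simp [dpair, Pi.add_apply, mul_add, Finset.sum_add_distrib]
  · intro c x
    simp only [dpair, Pi.smul_apply, smul_eq_mul, Finset.mul_sum]
    exact Finset.sum_congr rfl fun i _ => by ring

lemma dpair_add_right (u x y : Fin n → ℚ) : dpair u (x + y) = dpair u x + dpair u y :=
  (dpair_isLinearMap u).map_add x y

lemma dpair_smul_right (u : Fin n → ℚ) (c : ℚ) (x : Fin n → ℚ) :
    dpair u (c • x) = c * dpair u x := (dpair_isLinearMap u).map_smul c x

lemma dpair_add_left (u v x : Fin n → ℚ) : dpair (u + v) x = dpair u x + dpair v x := by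
  simp [dpair, Pi.add_apply, add_mul, Finset.sum_add_distrib]

lemma dpair_sub_left (u v x : Fin n → ℚ) : dpair (u - v) x = dpair u x - dpair v x := by
  simp [dpair, Pi.sub_apply, sub_mul, Finset.sum_sub_distrib]

lemma dpair_smul_left (c : ℚ) (u x : Fin n → ℚ) : dpair (c • u) x = c * dpair u x := by
  simp only [dpair, Pi.smul_apply, smul_eq_mul, Finset.mul_sum]
  exact Finset.sum_congr rfl fun i _ => by ring

lemma hull_halfspace {X : Set (Fin n → ℚ)} {u : Fin n → ℚ} {c : ℚ}
    (h : ∀ x ∈ X, c ≤ dpair u x) : ∀ x ∈ convexHull ℚ X, c ≤ dpair u x :=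
  fun _ hx => convexHull_min h (convex_halfSpace_ge (dpair_isLinearMap u) c) hx

lemma hull_hyperplane {X : Set (Fin n → ℚ)} {u : Fin n → ℚ} {c : ℚ}
    (h : ∀ x ∈ X, dpair u x = c) : ∀ x ∈ convexHull ℚ X, dpair u x = c :=
  fun _ hx => convexHull_min h (convex_hyperplane (dpair_isLinearMap u) c) hx

lemma pairing_eq_dpair (w : Fin n → ℤ) (x : Fin n → ℚ) :
    pairing w x = dpair (fun i => (w i : ℚ)) x := rfl

lemma lattice_dpair_int {x y : Fin n → ℚ} (hx : IsLatticePt x) (hy : IsLatticePt y) :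
    ∃ z : ℤ, dpair x y = (z : ℚ) := by
  choose a ha using hx
  choose b hb using hy
  refine ⟨∑ i, a i * b i, ?_⟩
  rw [dpair]
  push_cast
  exact Finset.sum_congr rfl fun i _ => by rw [ha, hb]

end MutAux

/-- Combinatorial mutations preserve the Ehrhart series of the dual polytope: for every
positive integer `k`, the dilates `kP*` and `kQ*` contain the same number of lattice
points, where `Q = mut_w(P,F)`. -/
theorem mutation_preserves_dual_ehrhart {n : ℕ} (w : Fin n → ℤ) (P F : Set (Fin n → ℚ))
    (G : ℤ → Set (Fin n → ℚ)) (hP : IsLatticePolytope P)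
    (h0 : (0 : Fin n → ℚ) ∈ interior P) (hw : IsPrimitive w)
    (hdata : IsMutData w P F G) :
    ∀ k : ℕ, 0 < k →
      Set.ncard {u : Fin n → ℤ | (fun i => (u i : ℚ)) ∈ (k : ℚ) • dualP P} =
      Set.ncard {u : Fin n → ℤ |
        (fun i => (u i : ℚ)) ∈ (k : ℚ) • dualP (mutation w P F G)} := by
  classical
  intro k hk
  obtain ⟨SP, hSPlat, hPeq⟩ := hP
  obtain ⟨⟨SF, hSFlat, hFeq⟩, hFne, hFw, hG⟩ := hdata
  have hSFne : SF.Nonempty := by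
    rw [← Finset.coe_nonempty, ← convexHull_nonempty_iff (𝕜 := ℚ), ← hFeq]; exact hFne
  obtain ⟨wQ, hwQ⟩ : ∃ wQ : Fin n → ℚ, wQ = fun i => (w i : ℚ) := ⟨_, rfl⟩
  have hwQlat : IsLatticePt wQ := fun i => ⟨w i, by rw [hwQ]⟩
  have hpd : ∀ x, pairing w x = dpair wQ x := fun x => by rw [hwQ]; rfl
  -- the piecewise-linear shift amount
  obtain ⟨m, hm_le, hm_ex, hm_shift, hm_smul, hm_int⟩ :
      ∃ m : (Fin n → ℚ) → ℚ,
        (∀ u, ∀ f ∈ F, m u ≤ dpair u f) ∧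
        (∀ u, ∃ f ∈ F, dpair u f = m u) ∧
        (∀ u c, m (u + c • wQ) = m u) ∧
        (∀ c : ℚ, 0 ≤ c → ∀ u, m (c • u) = c * m u) ∧
        (∀ v : Fin n → ℤ, ∃ z : ℤ, m (fun i => (v i : ℚ)) = (z : ℚ)) := by
    refine ⟨fun u => SF.inf' hSFne (fun s => dpair u s), ?_, ?_, ?_, ?_, ?_⟩
    · intro u f hf
      rw [hFeq] at hf
      exact hull_halfspace (fun s hs => Finset.inf'_le _ hs) f hf
    · intro u
      obtain ⟨s, hs, hse⟩ := SF.exists_mem_eq_inf' hSFne (fun s => dpair u s)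
      refine ⟨s, ?_, hse.symm⟩
      rw [hFeq]
      exact subset_convexHull ℚ _ hs
    · intro u c
      refine Finset.inf'_congr hSFne rfl ?_
      intro s hs
      have hsF : s ∈ F := hFeq ▸ subset_convexHull ℚ _ hs
      have : dpair wQ s = 0 := by rw [← hpd]; exact hFw s hsF
      rw [dpair_add_left, dpair_smul_left, this, mul_zero, add_zero]
    · intro c hc u
      apply le_antisymm
      · obtain ⟨s, hs, hse⟩ := SF.exists_mem_eq_inf' hSFne (fun s => dpair u s)
        calc SF.inf' hSFne (fun s => dpair (c • u) s) ≤ dpair (c • u) s :=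
              Finset.inf'_le _ hs
          _ = c * SF.inf' hSFne (fun s => dpair u s) := by rw [dpair_smul_left, ← hse]
      · apply Finset.le_inf'
        intro s hs
        rw [dpair_smul_left]
        exact mul_le_mul_of_nonneg_left (Finset.inf'_le _ hs) hc
    · intro v
      obtain ⟨s, hs, hse⟩ := SF.exists_mem_eq_inf' hSFne
        (fun s => dpair (fun i => ((v i : ℤ) : ℚ)) s)
      obtain ⟨z, hz⟩ := lattice_dpair_int (fun i => ⟨v i, rfl⟩) (hSFlat s hs)
      exact ⟨z, hse.trans hz⟩
  have hPconv : Convex ℚ P := hPeq ▸ convex_convexHull ℚ _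
  have hwSliceP : ∀ h : ℤ, wSlice w h P ⊆ P :=
    fun h => convexHull_min (fun x hx => hx.1) hPconv
  have hSlicePair : ∀ (h : ℤ) (x : Fin n → ℚ), x ∈ wSlice w h P → dpair wQ x = (h : ℚ) :=
    fun h x hx => hull_hyperplane (fun y hy => by rw [← hpd]; exact hy.2.2) x hx
  have hQ1 : ∀ h : ℤ, h < 0 → G h ⊆ mutation w P F G := by
    intro h hh
    refine subset_trans ?_ (subset_convexHull ℚ _)
    intro v hv
    exact Set.mem_union_left _ (Set.mem_iUnion.2 ⟨h, Set.mem_iUnion.2 ⟨hh, hv⟩⟩)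
  have hQ2 : ∀ h : ℤ, 0 ≤ h → wSlice w h P + (h : ℚ) • F ⊆ mutation w P F G := by
    intro h hh
    refine subset_trans ?_ (subset_convexHull ℚ _)
    intro v hv
    exact Set.mem_union_right _ (Set.mem_iUnion.2 ⟨h, Set.mem_iUnion.2 ⟨hh, hv⟩⟩)
  -- Direction 1: u ∈ Q* implies u + m(u) • wQ ∈ P*
  have dir1 : ∀ u ∈ dualP (mutation w P F G), u + m u • wQ ∈ dualP P := by
    intro u hu v hv
    rw [hPeq] at hv
    have hv2 := minkowski_hull SP hv
    refine hull_halfspace ?_ v hv2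
    intro e he
    have heP : e ∈ P.extremePoints ℚ := by rw [hPeq]; exact he
    have heSP : e ∈ (SP : Set (Fin n → ℚ)) := extremePoints_convexHull_subset he
    have helat : IsLatticePt e := hSPlat e heSP
    obtain ⟨hz, hhz⟩ := lattice_dpair_int hwQlat helat
    obtain ⟨f₀, hf₀F, hf₀m⟩ := hm_ex u
    rw [dpair_add_left, dpair_smul_left, hhz]
    rcases le_or_gt 0 hz with hpos | hneg
    · have heS : e ∈ wSlice w hz P :=
        subset_convexHull ℚ _ ⟨hPeq ▸ subset_convexHull ℚ _ heSP, helat, by rw [hpd]; exact hhz⟩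
      have hq : e + (hz : ℚ) • f₀ ∈ mutation w P F G :=
        hQ2 hz hpos (Set.add_mem_add heS (Set.smul_mem_smul_set hf₀F))
      have h1 := hu _ hq
      rw [dpair_add_right, dpair_smul_right, hf₀m] at h1
      nlinarith [h1]
    · have hev : e ∈ G hz + (-(hz : ℚ)) • F := (hG hz hneg).2.1 ⟨heP, by rw [hpd]; exact hhz⟩
      obtain ⟨g, hg, b, hb, hgb⟩ := hev
      obtain ⟨f, hf, rfl⟩ := hb
      have hgQ := hu g (hQ1 hz hneg hg)
      rw [← hgb, dpair_add_right, dpair_smul_right]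
      have hfm := hm_le u f hf
      have hzneg : (0 : ℚ) ≤ -(hz : ℚ) := by
        have : (hz : ℚ) < 0 := by exact_mod_cast hneg
        linarith
      nlinarith [mul_le_mul_of_nonneg_left hfm hzneg]
  -- Direction 2: u ∈ P* implies u - m(u) • wQ ∈ Q*
  have dir2 : ∀ u ∈ dualP P, u - m u • wQ ∈ dualP (mutation w P F G) := by
    intro u hu v hv
    refine hull_halfspace ?_ v hv
    intro x hx
    obtain ⟨f₀, hf₀F, hf₀m⟩ := hm_ex u
    have hf₀w : dpair wQ f₀ = 0 := by rw [← hpd]; exact hFw f₀ hf₀F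
    rcases hx with hx | hx
    · simp only [Set.mem_iUnion] at hx
      obtain ⟨h, hh, hxG⟩ := hx
      have hx2 : x + (-(h : ℚ)) • f₀ ∈ wSlice w h P :=
        (hG h hh).2.2 (Set.add_mem_add hxG (Set.smul_mem_smul_set hf₀F))
      have h1 := hu _ (hwSliceP h hx2)
      rw [dpair_add_right, dpair_smul_right, hf₀m] at h1
      have h2 := hSlicePair h _ hx2
      rw [dpair_add_right, dpair_smul_right, hf₀w, mul_zero, add_zero] at h2
      rw [dpair_sub_left, dpair_smul_left, h2]
      nlinarith [h1]
    · simp only [Set.mem_iUnion] at hx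
      obtain ⟨h, hh, hxm⟩ := hx
      obtain ⟨y, hy, b, hb, hyb⟩ := hxm
      obtain ⟨f, hf, rfl⟩ := hb
      have h1 := hu y (hwSliceP h hy)
      have h2 := hSlicePair h y hy
      have hfw : dpair wQ f = 0 := by rw [← hpd]; exact hFw f hf
      have hfm := hm_le u f hf
      have hhq : (0 : ℚ) ≤ (h : ℚ) := by exact_mod_cast hh
      rw [← hyb, dpair_sub_left, dpair_smul_left, dpair_add_right, dpair_smul_right,
        dpair_add_right, dpair_smul_right, h2, hfw, mul_zero, add_zero]
      nlinarith [mul_le_mul_of_nonneg_left hfm hhq]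
  -- the integral bijection
  obtain ⟨mz, hmz⟩ : ∃ mz : (Fin n → ℤ) → ℤ,
      ∀ v : Fin n → ℤ, m (fun i => (v i : ℚ)) = ((mz v : ℤ) : ℚ) :=
    ⟨fun v => (hm_int v).choose, fun v => (hm_int v).choose_spec⟩
  obtain ⟨fI, hfI⟩ : ∃ fI : (Fin n → ℤ) → (Fin n → ℤ),
      fI = fun v => fun i => v i + mz v * w i := ⟨_, rfl⟩
  obtain ⟨gI, hgI⟩ : ∃ gI : (Fin n → ℤ) → (Fin n → ℤ),
      gI = fun v => fun i => v i - mz v * w i := ⟨_, rfl⟩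
  have castf : ∀ v : Fin n → ℤ,
      (fun i => ((fI v i : ℤ) : ℚ)) = (fun i => (v i : ℚ)) + m (fun i => (v i : ℚ)) • wQ := by
    intro v
    funext i
    rw [hfI, hwQ]
    simp only [Pi.add_apply, Pi.smul_apply, smul_eq_mul, hmz v]
    push_cast
    ring
  have castg : ∀ v : Fin n → ℤ,
      (fun i => ((gI v i : ℤ) : ℚ)) = (fun i => (v i : ℚ)) - m (fun i => (v i : ℚ)) • wQ := by
    intro v
    funext i
    rw [hgI, hwQ]
    simp only [Pi.sub_apply, Pi.smul_apply, smul_eq_mul, hmz v]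
    push_cast
    ring
  have hmzf : ∀ v : Fin n → ℤ, mz (fI v) = mz v := by
    intro v
    have h1 : ((mz (fI v) : ℤ) : ℚ) = ((mz v : ℤ) : ℚ) := by
      rw [← hmz, ← hmz, castf v, hm_shift]
    exact_mod_cast h1
  have hmzg : ∀ v : Fin n → ℤ, mz (gI v) = mz v := by
    intro v
    have h1 : ((mz (gI v) : ℤ) : ℚ) = ((mz v : ℤ) : ℚ) := by
      rw [← hmz, ← hmz, castg v]
      have : (fun i => (v i : ℚ)) - m (fun i => (v i : ℚ)) • wQ
          = (fun i => (v i : ℚ)) + (-(m (fun i => (v i : ℚ)))) • wQ := by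
        funext i; simp; ring
      rw [this, hm_shift]
    exact_mod_cast h1
  have gf : ∀ v, gI (fI v) = v := by
    intro v
    funext i
    rw [hgI]
    simp only [hmzf v]
    rw [hfI]
    ring
  have fg : ∀ v, fI (gI v) = v := by
    intro v
    funext i
    rw [hfI]
    simp only [hmzg v]
    rw [hgI]
    ring
  have hkpos : (0 : ℚ) < (k : ℚ) := by exact_mod_cast hk
  -- the image equality
  have hA : {u : Fin n → ℤ | (fun i => (u i : ℚ)) ∈ (k : ℚ) • dualP P}
      = fI '' {u : Fin n → ℤ | (fun i => (u i : ℚ)) ∈ (k : ℚ) • dualP (mutation w P F G)} := by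
    ext v
    constructor
    · intro hv
      refine ⟨gI v, ?_, fg v⟩
      simp only [Set.mem_setOf_eq] at hv ⊢
      obtain ⟨p, hp, hpv⟩ := hv
      have hcg : (fun i => ((gI v i : ℤ) : ℚ)) = (k : ℚ) • (p - m p • wQ) := by
        rw [castg v, ← hpv, hm_smul (k : ℚ) hkpos.le p, smul_sub, smul_smul]
      rw [hcg]
      exact Set.smul_mem_smul_set (dir2 p hp)
    · rintro ⟨b, hb, rfl⟩
      simp only [Set.mem_setOf_eq] at hb ⊢
      obtain ⟨q, hq, hqb⟩ := hb
      have hcf : (fun i => ((fI b i : ℤ) : ℚ)) = (k : ℚ) • (q + m q • wQ) := by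
        rw [castf b, ← hqb, hm_smul (k : ℚ) hkpos.le q, smul_add, smul_smul]
      rw [hcf]
      exact Set.smul_mem_smul_set (dir1 q hq)
  rw [hA, Set.ncard_image_of_injOn]
  intro x _ y _ hxy
  rw [← gf x, hxy, gf y]
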